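/- Let g ∈ N be positive and invertible with E_{Z(N)}(g) = 1, and let f ∈ N^o ⊗ N. Then the following are equivalent: (i) f = (1^o ⊗ g)·e (i.e., f is the separating element of N associated to g); (ii) f is idempotent (f² = f), the left-multiplication operators by f and by e on N^o ⊗ N have the same kernel, and f is self-adjoint for the deformed involution, i.e., ((g^{1/2})^o ⊗ g^{1/2}) · f* · ((g^{-1/2})^o ⊗ g^{-1/2}) = f, where f* is the adjoint of f in N^o ⊗ N for the involution (a^o ⊗ b)* = (a*)^o ⊗ b*. -/

import Mathlib

/- Context: `N = ⨁_{γ ∈ Γ} M_{n γ}(ℂ)`, with matrix units `matUnit n γ i j`,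
`N^o ⊗ N` the algebraic tensor product of the opposite algebra with `N`,
`mulMap` the multiplication map `m(a^o ⊗ b) = a * b`, `sepE` the symmetric
separating element `e = Σ_γ Σ_{i,j} (1/n_γ) (e^γ_{i,j})^o ⊗ e^γ_{j,i}`, and
`EZ` the canonical conditional expectation onto the center of `N`. -/

open scoped TensorProduct
open MulOpposite

/-- The algebra `N = ⨁_{γ ∈ Γ} M_{n γ}(ℂ)`. -/
abbrev NAlg {Γ : Type*} [Fintype Γ] (n : Γ → ℕ) : Type _ :=
  ∀ γ : Γ, Matrix (Fin (n γ)) (Fin (n γ)) ℂ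

/-- The matrix units `e^γ_{i,j}` of `N`. -/
noncomputable def matUnit {Γ : Type*} [Fintype Γ] [DecidableEq Γ] (n : Γ → ℕ)
    (γ : Γ) (i j : Fin (n γ)) : NAlg n :=
  Pi.single γ (Matrix.single i j 1)

/-- The multiplication map `m : N^o ⊗ N → N`, `m(a^o ⊗ b) = ab`. -/
noncomputable def mulMap {Γ : Type*} [Fintype Γ] (n : Γ → ℕ) :
    ((NAlg n)ᵐᵒᵖ ⊗[ℂ] NAlg n) →ₗ[ℂ] NAlg n :=
  (LinearMap.mul' ℂ (NAlg n)).comp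
    (TensorProduct.map (opLinearEquiv ℂ).symm.toLinearMap LinearMap.id)

/-- The symmetric separating element `e = Σ_γ Σ_{i,j} (1/n_γ) (e^γ_{i,j})^o ⊗ e^γ_{j,i}`. -/
noncomputable def sepE {Γ : Type*} [Fintype Γ] [DecidableEq Γ] (n : Γ → ℕ) :
    (NAlg n)ᵐᵒᵖ ⊗[ℂ] NAlg n :=
  ∑ γ : Γ, ∑ i : Fin (n γ), ∑ j : Fin (n γ),
    (n γ : ℂ)⁻¹ • (op (matUnit n γ i j) ⊗ₜ[ℂ] matUnit n γ j i)

/-- `f ∈ N^o ⊗ N` is a separating element of `N` if `f(a^o ⊗ 1) = f(1 ⊗ a)` for all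
`a ∈ N` and `m(f) = 1`. -/
def IsSepElt {Γ : Type*} [Fintype Γ] (n : Γ → ℕ) (f : (NAlg n)ᵐᵒᵖ ⊗[ℂ] NAlg n) : Prop :=
  (∀ a : NAlg n, f * (op a ⊗ₜ[ℂ] (1 : NAlg n)) = f * ((1 : (NAlg n)ᵐᵒᵖ) ⊗ₜ[ℂ] a)) ∧
    mulMap n f = 1

/-- The canonical conditional expectation `E_{Z(N)} : N → Z(N)`,
`E_{Z(N)}(x) = Σ_γ Σ_{i,j} (1/n_γ) e^γ_{i,j} x e^γ_{j,i}`. -/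
noncomputable def EZ {Γ : Type*} [Fintype Γ] [DecidableEq Γ] (n : Γ → ℕ)
    (x : NAlg n) : NAlg n :=
  ∑ γ : Γ, ∑ i : Fin (n γ), ∑ j : Fin (n γ),
    (n γ : ℂ)⁻¹ • (matUnit n γ i j * x * matUnit n γ j i)


section AuxLemmas

set_option synthInstance.maxHeartbeats 1000000
set_option maxHeartbeats 10000000

variable {Γ : Type*} [Fintype Γ] [DecidableEq Γ] (n : Γ → ℕ)


lemma matUnit_mul_same (γ : Γ) (i j k l : Fin (n γ)) :
    matUnit n γ i j * matUnit n γ k l = if j = k then matUnit n γ i l else 0 := by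
  split_ifs with hjk
  · subst hjk
    funext ρ
    rcases eq_or_ne ρ γ with rfl | h
    · simp [matUnit, Matrix.single_mul_single_same]
    · simp [matUnit, Pi.single_eq_of_ne h]
  · funext ρ
    rcases eq_or_ne ρ γ with rfl | h
    · simp [matUnit, Matrix.single_mul_single_of_ne (1:ℂ) i j k hjk (1:ℂ)]
    · simp [matUnit, Pi.single_eq_of_ne h]

lemma matUnit_mul_ne {γ δ : Γ} (h : γ ≠ δ) (i j : Fin (n γ)) (k l : Fin (n δ)) :
    matUnit n γ i j * matUnit n δ k l = 0 := by
  funext ρ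
  rcases eq_or_ne ρ γ with rfl | h1
  · simp [matUnit, Pi.single_eq_of_ne h]
  · simp [matUnit, Pi.single_eq_of_ne h1]

lemma star_matUnit (γ : Γ) (i j : Fin (n γ)) :
    star (matUnit n γ i j) = matUnit n γ j i := by
  funext ρ
  rcases eq_or_ne ρ γ with rfl | h
  · simp only [Pi.star_apply, matUnit, Pi.single_eq_same]
    ext a b
    simp [Matrix.star_apply, Matrix.single, and_comm, eq_comm]
  · simp [matUnit, Pi.single_eq_of_ne h]

lemma sum_matUnit_diag : ∑ γ : Γ, ∑ i : Fin (n γ), matUnit n γ i i = 1 := by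
  funext ρ
  rw [Finset.sum_apply]
  rw [Finset.sum_eq_single ρ]
  · rw [Finset.sum_apply]
    ext a b
    simp only [matUnit, Pi.single_eq_same, Matrix.sum_apply, Matrix.single,
      Matrix.of_apply, Pi.one_apply, Matrix.one_apply]
    simp [ite_and, Finset.sum_ite_eq, eq_comm]
  · intro γ _ hγ
    rw [Finset.sum_apply]
    apply Finset.sum_eq_zero
    intro i _
    simp [matUnit, Pi.single_eq_of_ne (Ne.symm hγ)]
  · simp

lemma nalg_eq_sum (x : NAlg n) :
    x = ∑ γ : Γ, ∑ k : Fin (n γ), ∑ l : Fin (n γ), x γ k l • matUnit n γ k l := by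
  funext ρ
  rw [Finset.sum_apply, Finset.sum_eq_single ρ]
  · rw [Finset.sum_apply]
    conv_lhs => rw [Matrix.matrix_eq_sum_single (x ρ)]
    apply Finset.sum_congr rfl
    intro k _
    rw [Finset.sum_apply]
    apply Finset.sum_congr rfl
    intro l _
    simp [matUnit, Matrix.smul_single]
  · intro γ _ hγ
    rw [Finset.sum_apply]
    apply Finset.sum_eq_zero
    intro k _
    rw [Finset.sum_apply]
    apply Finset.sum_eq_zero
    intro l _
    simp [matUnit, Pi.single_eq_of_ne (Ne.symm hγ)]
  · simp

lemma sepE_mul_op_unit (δ : Γ) (k l : Fin (n δ)) :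
    sepE n * (op (matUnit n δ k l) ⊗ₜ[ℂ] (1:NAlg n)) =
      sepE n * ((1:(NAlg n)ᵐᵒᵖ) ⊗ₜ[ℂ] matUnit n δ k l) := by
  have hL : sepE n * (op (matUnit n δ k l) ⊗ₜ[ℂ] (1:NAlg n)) =
      ∑ j : Fin (n δ), (n δ : ℂ)⁻¹ • (op (matUnit n δ k j) ⊗ₜ[ℂ] matUnit n δ j l) := by
    unfold sepE
    simp only [Finset.sum_mul, smul_mul_assoc, Algebra.TensorProduct.tmul_mul_tmul,
      mul_one, ← MulOpposite.op_mul]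
    rw [Finset.sum_eq_single δ]
    · rw [Finset.sum_eq_single l]
      · apply Finset.sum_congr rfl
        intro j _
        rw [matUnit_mul_same]
        simp
      · intro i _ hi
        apply Finset.sum_eq_zero; intro j _
        rw [matUnit_mul_same, if_neg (Ne.symm hi)]
        simp
      · simp
    · intro γ _ hγ
      apply Finset.sum_eq_zero; intro i _; apply Finset.sum_eq_zero; intro j _
      rw [matUnit_mul_ne n (Ne.symm hγ)]
      simp
    · simp
  have hR : sepE n * ((1:(NAlg n)ᵐᵒᵖ) ⊗ₜ[ℂ] matUnit n δ k l) =
      ∑ j : Fin (n δ), (n δ : ℂ)⁻¹ • (op (matUnit n δ k j) ⊗ₜ[ℂ] matUnit n δ j l) := by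
    unfold sepE
    simp only [Finset.sum_mul, smul_mul_assoc, Algebra.TensorProduct.tmul_mul_tmul,
      mul_one]
    rw [Finset.sum_eq_single δ]
    · rw [Finset.sum_eq_single k]
      · apply Finset.sum_congr rfl
        intro j _
        rw [matUnit_mul_same]
        simp
      · intro i _ hi
        apply Finset.sum_eq_zero; intro j _
        rw [matUnit_mul_same, if_neg hi]
        simp
      · simp
    · intro γ _ hγ
      apply Finset.sum_eq_zero; intro i _; apply Finset.sum_eq_zero; intro j _
      rw [matUnit_mul_ne n hγ]
      simp
    · simp
  rw [hL, hR]

lemma op_unit_mul_sepE (δ : Γ) (k l : Fin (n δ)) :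
    (op (matUnit n δ k l) ⊗ₜ[ℂ] (1:NAlg n)) * sepE n =
      ((1:(NAlg n)ᵐᵒᵖ) ⊗ₜ[ℂ] matUnit n δ k l) * sepE n := by
  have hL : (op (matUnit n δ k l) ⊗ₜ[ℂ] (1:NAlg n)) * sepE n =
      ∑ i : Fin (n δ), (n δ : ℂ)⁻¹ • (op (matUnit n δ i l) ⊗ₜ[ℂ] matUnit n δ k i) := by
    unfold sepE
    simp only [Finset.mul_sum, mul_smul_comm, Algebra.TensorProduct.tmul_mul_tmul,
      one_mul, ← MulOpposite.op_mul]
    rw [Finset.sum_eq_single δ]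
    · apply Finset.sum_congr rfl
      intro i _
      rw [Finset.sum_eq_single k]
      · rw [matUnit_mul_same]
        simp
      · intro j _ hj
        rw [matUnit_mul_same, if_neg hj]
        simp
      · simp
    · intro γ _ hγ
      apply Finset.sum_eq_zero; intro i _; apply Finset.sum_eq_zero; intro j _
      rw [matUnit_mul_ne n hγ]
      simp
    · simp
  have hR : ((1:(NAlg n)ᵐᵒᵖ) ⊗ₜ[ℂ] matUnit n δ k l) * sepE n =
      ∑ i : Fin (n δ), (n δ : ℂ)⁻¹ • (op (matUnit n δ i l) ⊗ₜ[ℂ] matUnit n δ k i) := by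
    unfold sepE
    simp only [Finset.mul_sum, mul_smul_comm, Algebra.TensorProduct.tmul_mul_tmul,
      one_mul]
    rw [Finset.sum_eq_single δ]
    · apply Finset.sum_congr rfl
      intro i _
      rw [Finset.sum_eq_single l]
      · rw [matUnit_mul_same]
        simp
      · intro j _ hj
        rw [matUnit_mul_same, if_neg (Ne.symm hj)]
        simp
      · simp
    · intro γ _ hγ
      apply Finset.sum_eq_zero; intro i _; apply Finset.sum_eq_zero; intro j _
      rw [matUnit_mul_ne n (Ne.symm hγ)]
      simp
    · simp
  rw [hL, hR]

lemma sepE_mul_op_tmul (x : NAlg n) :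
    sepE n * (op x ⊗ₜ[ℂ] (1:NAlg n)) = sepE n * ((1:(NAlg n)ᵐᵒᵖ) ⊗ₜ[ℂ] x) := by
  conv_lhs => rw [nalg_eq_sum n x]
  conv_rhs => rw [nalg_eq_sum n x]
  simp only [Finset.op_sum, MulOpposite.op_smul, TensorProduct.sum_tmul,
    ← TensorProduct.smul_tmul', TensorProduct.tmul_sum, TensorProduct.tmul_smul,
    Finset.mul_sum, mul_smul_comm, sepE_mul_op_unit]

lemma op_tmul_mul_sepE (x : NAlg n) :
    (op x ⊗ₜ[ℂ] (1:NAlg n)) * sepE n = ((1:(NAlg n)ᵐᵒᵖ) ⊗ₜ[ℂ] x) * sepE n := by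
  conv_lhs => rw [nalg_eq_sum n x]
  conv_rhs => rw [nalg_eq_sum n x]
  simp only [Finset.op_sum, MulOpposite.op_smul, TensorProduct.sum_tmul,
    ← TensorProduct.smul_tmul', TensorProduct.tmul_sum, TensorProduct.tmul_smul,
    Finset.sum_mul, smul_mul_assoc, op_unit_mul_sepE]

lemma sepE_absorbR (a b : NAlg n) :
    sepE n * (op a ⊗ₜ[ℂ] b) = sepE n * ((1:(NAlg n)ᵐᵒᵖ) ⊗ₜ[ℂ] (a * b)) := by
  have h1 : (op a ⊗ₜ[ℂ] b) = (op a ⊗ₜ[ℂ] (1:NAlg n)) * ((1:(NAlg n)ᵐᵒᵖ) ⊗ₜ[ℂ] b) := by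
    rw [Algebra.TensorProduct.tmul_mul_tmul, mul_one, one_mul]
  rw [h1, ← mul_assoc, sepE_mul_op_tmul, mul_assoc,
    Algebra.TensorProduct.tmul_mul_tmul, one_mul]

lemma sepE_absorbL (a b : NAlg n) :
    (op a ⊗ₜ[ℂ] b) * sepE n = ((1:(NAlg n)ᵐᵒᵖ) ⊗ₜ[ℂ] (b * a)) * sepE n := by
  have h1 : (op a ⊗ₜ[ℂ] b) = ((1:(NAlg n)ᵐᵒᵖ) ⊗ₜ[ℂ] b) * (op a ⊗ₜ[ℂ] (1:NAlg n)) := by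
    rw [Algebra.TensorProduct.tmul_mul_tmul, one_mul, mul_one]
  rw [h1, mul_assoc, op_tmul_mul_sepE, ← mul_assoc,
    Algebra.TensorProduct.tmul_mul_tmul, one_mul]

lemma sepE_mul_EZ (x : NAlg n) :
    sepE n * ((1:(NAlg n)ᵐᵒᵖ) ⊗ₜ[ℂ] x) * sepE n
      = sepE n * ((1:(NAlg n)ᵐᵒᵖ) ⊗ₜ[ℂ] EZ n x) := by
  rw [mul_assoc]
  nth_rewrite 2 [sepE]
  rw [EZ]
  simp only [Finset.mul_sum, mul_smul_comm, TensorProduct.tmul_sum, TensorProduct.tmul_smul,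
    Algebra.TensorProduct.tmul_mul_tmul, one_mul, ← mul_assoc]
  apply Finset.sum_congr rfl; intro γ _
  apply Finset.sum_congr rfl; intro i _
  apply Finset.sum_congr rfl; intro j _
  congr 1
  rw [sepE_absorbR, mul_assoc]

lemma EZ_one (hn : ∀ γ, 1 ≤ n γ) : EZ n (1 : NAlg n) = 1 := by
  unfold EZ
  have hterm : ∀ γ : Γ, ∀ i j : Fin (n γ),
      matUnit n γ i j * 1 * matUnit n γ j i = matUnit n γ i i := by
    intro γ i j
    rw [mul_one, matUnit_mul_same, if_pos rfl]
  simp only [hterm]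
  rw [← sum_matUnit_diag n]
  apply Finset.sum_congr rfl; intro γ _
  apply Finset.sum_congr rfl; intro i _
  rw [Finset.sum_const, Finset.card_univ, Fintype.card_fin,
    ← Nat.cast_smul_eq_nsmul ℂ, smul_smul, mul_inv_cancel₀, one_smul]
  exact Nat.cast_ne_zero.mpr (Nat.one_le_iff_ne_zero.mp (hn γ))

lemma sepE_sq (hn : ∀ γ, 1 ≤ n γ) : sepE n * sepE n = sepE n := by
  have h := sepE_mul_EZ n 1
  rw [EZ_one n hn, ← Algebra.TensorProduct.one_def, mul_one] at h
  exact h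


end AuxLemmas

set_option synthInstance.maxHeartbeats 1000000
set_option maxHeartbeats 10000000

/-- Let `g ∈ N` be positive and invertible with `E_{Z(N)}(g) = 1`, let `s = g^{1/2}` be
its positive square root, and let `tstar` be the componentwise involution of `N^o ⊗ N`
(`(a^o ⊗ b)* = (a*)^o ⊗ b*`, determined by additivity).  Then `f = (1 ⊗ g)·e` iff `f` is
idempotent, left multiplication by `f` and by `e` have the same kernel, and `f` is
self-adjoint for the deformed involution
`(s^o ⊗ s)·f*·((s⁻¹)^o ⊗ s⁻¹) = f`. -/
theorem sep_iff_deformed_orthogonal_projection {Γ : Type*} [Fintype Γ] [DecidableEq Γ]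
    [Nonempty Γ] (n : Γ → ℕ) (hn : ∀ γ, 1 ≤ n γ)
    (g : NAlg n) (hgpos : ∃ b : NAlg n, g = star b * b) (hgu : IsUnit g)
    (hgE : EZ n g = 1)
    (s : NAlg n) (hspos : ∃ c : NAlg n, s = star c * c) (hssq : s * s = g)
    (tstar : (NAlg n)ᵐᵒᵖ ⊗[ℂ] NAlg n → (NAlg n)ᵐᵒᵖ ⊗[ℂ] NAlg n)
    (tstar_add : ∀ x y, tstar (x + y) = tstar x + tstar y)
    (tstar_tmul : ∀ (a b : NAlg n), tstar (op a ⊗ₜ[ℂ] b) = op (star a) ⊗ₜ[ℂ] star b)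
    (f : (NAlg n)ᵐᵒᵖ ⊗[ℂ] NAlg n) :
    f = (op (1 : NAlg n) ⊗ₜ[ℂ] g) * sepE n ↔
      (f * f = f ∧
        (∀ u : (NAlg n)ᵐᵒᵖ ⊗[ℂ] NAlg n, f * u = 0 ↔ sepE n * u = 0) ∧
        (op s ⊗ₜ[ℂ] s) * tstar f * (op (Ring.inverse s) ⊗ₜ[ℂ] Ring.inverse s) = f) := by
  classical
  obtain ⟨bg, hbg⟩ := hgpos
  have hgstar : star g = g := by rw [hbg, star_mul, star_star]
  obtain ⟨cs, hcs⟩ := hspos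
  have hsstar : star s = s := by rw [hcs, star_mul, star_star]
  obtain ⟨gu, hgu_eq⟩ := hgu
  have hggi : g * (↑gu⁻¹ : NAlg n) = 1 := by rw [← hgu_eq]; exact gu.mul_inv
  have hgig : (↑gu⁻¹ : NAlg n) * g = 1 := by rw [← hgu_eq]; exact gu.inv_mul
  set gi : NAlg n := (↑gu⁻¹ : NAlg n) with hgi_def
  have hsg : s * g = g * s := by rw [← hssq, mul_assoc]
  have hsgi : s * gi = gi * s := by
    calc s * gi = (gi * g) * (s * gi) := by rw [hgig, one_mul]
      _ = gi * ((g * s) * gi) := by rw [mul_assoc, mul_assoc]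
      _ = gi * ((s * g) * gi) := by rw [hsg]
      _ = (gi * s) * (g * gi) := by rw [mul_assoc, mul_assoc]
      _ = gi * s := by rw [hggi, mul_one]
  have hsu : IsUnit s := by
    refine isUnit_iff_exists.mpr ⟨s * gi, ?_, ?_⟩
    · rw [← mul_assoc, hssq, hggi]
    · rw [hsgi, mul_assoc, hssq, hgig]
  set si : NAlg n := Ring.inverse s with hsi_def
  have hssi : s * si = 1 := Ring.mul_inverse_cancel s hsu
  have hsis : si * s = 1 := Ring.inverse_mul_cancel s hsu
  have op1 : op (1 : NAlg n) = (1 : (NAlg n)ᵐᵒᵖ) := rfl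
  have tt : ∀ x y : NAlg n,
      ((1:(NAlg n)ᵐᵒᵖ) ⊗ₜ[ℂ] x) * ((1:(NAlg n)ᵐᵒᵖ) ⊗ₜ[ℂ] y)
        = (1:(NAlg n)ᵐᵒᵖ) ⊗ₜ[ℂ] (x * y) := by
    intro x y
    rw [Algebra.TensorProduct.tmul_mul_tmul, one_mul]
  -- tstar machinery
  have tstar_zero : tstar 0 = 0 := by
    have h0 := tstar_add 0 0
    rw [add_zero] at h0
    exact (left_eq_add.mp h0)
  have tstar_sum : ∀ (t : Finset Γ) (F : Γ → (NAlg n)ᵐᵒᵖ ⊗[ℂ] NAlg n),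
      tstar (∑ x ∈ t, F x) = ∑ x ∈ t, tstar (F x) := by
    intro t F
    exact map_sum (AddMonoidHom.mk' tstar tstar_add) F t
  have tstar_sumF : ∀ (m : ℕ) (F : Fin m → (NAlg n)ᵐᵒᵖ ⊗[ℂ] NAlg n),
      tstar (∑ x : Fin m, F x) = ∑ x : Fin m, tstar (F x) := by
    intro m F
    exact map_sum (AddMonoidHom.mk' tstar tstar_add) F Finset.univ
  have tstar_mul : ∀ x y, tstar (x * y) = tstar y * tstar x := by
    have base : ∀ (a c : (NAlg n)ᵐᵒᵖ) (b d : NAlg n),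
        tstar ((a ⊗ₜ[ℂ] b) * (c ⊗ₜ[ℂ] d)) = tstar (c ⊗ₜ[ℂ] d) * tstar (a ⊗ₜ[ℂ] b) := by
      intro a c b d
      rw [← MulOpposite.op_unop a, ← MulOpposite.op_unop c]
      simp only [Algebra.TensorProduct.tmul_mul_tmul, ← MulOpposite.op_mul, tstar_tmul,
        star_mul]
    intro x
    induction x using TensorProduct.induction_on with
    | zero => intro y; rw [zero_mul, tstar_zero, mul_zero]
    | tmul a b =>
      intro y
      induction y using TensorProduct.induction_on with
      | zero => rw [mul_zero, tstar_zero, zero_mul]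
      | tmul c d => exact base a c b d
      | add y1 y2 h1 h2 => rw [mul_add, tstar_add, tstar_add, add_mul, h1, h2]
    | add x1 x2 h1 h2 =>
      intro y
      rw [add_mul, tstar_add, tstar_add, mul_add, h1 y, h2 y]
  have tstar_E : tstar (sepE n) = sepE n := by
    rw [sepE]
    rw [tstar_sum]
    have hstep : ∀ γ : Γ,
        tstar (∑ i : Fin (n γ), ∑ j : Fin (n γ),
            (n γ : ℂ)⁻¹ • (op (matUnit n γ i j) ⊗ₜ[ℂ] matUnit n γ j i))
          = ∑ i : Fin (n γ), ∑ j : Fin (n γ),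
            (n γ : ℂ)⁻¹ • (op (matUnit n γ j i) ⊗ₜ[ℂ] matUnit n γ i j) := by
      intro γ
      rw [tstar_sumF]
      apply Finset.sum_congr rfl; intro i _
      rw [tstar_sumF]
      apply Finset.sum_congr rfl; intro j _
      rw [← TensorProduct.tmul_smul, tstar_tmul, star_smul, star_matUnit, star_matUnit,
        TensorProduct.tmul_smul]
      congr 1
      simp
    simp only [hstep]
    apply Finset.sum_congr rfl; intro γ _
    exact Finset.sum_comm
  have tstar_1g : tstar ((1:(NAlg n)ᵐᵒᵖ) ⊗ₜ[ℂ] g) = (1:(NAlg n)ᵐᵒᵖ) ⊗ₜ[ℂ] g := by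
    rw [← op1, tstar_tmul, star_one, hgstar]
  have hF2 : (((1:(NAlg n)ᵐᵒᵖ) ⊗ₜ[ℂ] g) * sepE n) * (((1:(NAlg n)ᵐᵒᵖ) ⊗ₜ[ℂ] g) * sepE n)
      = ((1:(NAlg n)ᵐᵒᵖ) ⊗ₜ[ℂ] g) * sepE n := by
    have hEg : sepE n * ((1:(NAlg n)ᵐᵒᵖ) ⊗ₜ[ℂ] g) * sepE n = sepE n := by
      rw [sepE_mul_EZ, hgE, ← Algebra.TensorProduct.one_def, mul_one]
    calc (((1:(NAlg n)ᵐᵒᵖ) ⊗ₜ[ℂ] g) * sepE n) * (((1:(NAlg n)ᵐᵒᵖ) ⊗ₜ[ℂ] g) * sepE n)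
        = ((1:(NAlg n)ᵐᵒᵖ) ⊗ₜ[ℂ] g) * (sepE n * ((1:(NAlg n)ᵐᵒᵖ) ⊗ₜ[ℂ] g) * sepE n) := by
          simp only [mul_assoc]
      _ = ((1:(NAlg n)ᵐᵒᵖ) ⊗ₜ[ℂ] g) * sepE n := by rw [hEg]
  have hFker : ∀ u, (((1:(NAlg n)ᵐᵒᵖ) ⊗ₜ[ℂ] g) * sepE n) * u = 0 ↔ sepE n * u = 0 := by
    intro u
    constructor
    · intro h
      have h2 := congrArg (fun z => ((1:(NAlg n)ᵐᵒᵖ) ⊗ₜ[ℂ] gi) * z) h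
      simp only [mul_zero] at h2
      rw [← mul_assoc, ← mul_assoc, tt, hgig, ← Algebra.TensorProduct.one_def,
        one_mul] at h2
      exact h2
    · intro h
      rw [mul_assoc, h, mul_zero]
  have hwE : (op s ⊗ₜ[ℂ] s) * sepE n = ((1:(NAlg n)ᵐᵒᵖ) ⊗ₜ[ℂ] g) * sepE n := by
    rw [sepE_absorbL, hssq]
  have hEw' : sepE n * (((1:(NAlg n)ᵐᵒᵖ) ⊗ₜ[ℂ] g) * (op si ⊗ₜ[ℂ] si)) = sepE n := by
    have h1 : ((1:(NAlg n)ᵐᵒᵖ) ⊗ₜ[ℂ] g) * (op si ⊗ₜ[ℂ] si) = op si ⊗ₜ[ℂ] (g * si) := by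
      rw [Algebra.TensorProduct.tmul_mul_tmul, one_mul]
    have h2 : si * (g * si) = 1 := by
      rw [← hssq, ← mul_assoc, ← mul_assoc, hsis, one_mul, hssi]
    rw [h1, sepE_absorbR, h2, ← Algebra.TensorProduct.one_def, mul_one]
  have tstar_F : tstar (((1:(NAlg n)ᵐᵒᵖ) ⊗ₜ[ℂ] g) * sepE n)
      = sepE n * ((1:(NAlg n)ᵐᵒᵖ) ⊗ₜ[ℂ] g) := by
    rw [tstar_mul, tstar_E, tstar_1g]
  have hFdef : (op s ⊗ₜ[ℂ] s) * tstar (((1:(NAlg n)ᵐᵒᵖ) ⊗ₜ[ℂ] g) * sepE n)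
      * (op si ⊗ₜ[ℂ] si) = ((1:(NAlg n)ᵐᵒᵖ) ⊗ₜ[ℂ] g) * sepE n := by
    rw [tstar_F, ← mul_assoc, hwE]
    calc ((((1:(NAlg n)ᵐᵒᵖ) ⊗ₜ[ℂ] g) * sepE n) * ((1:(NAlg n)ᵐᵒᵖ) ⊗ₜ[ℂ] g))
          * (op si ⊗ₜ[ℂ] si)
        = ((1:(NAlg n)ᵐᵒᵖ) ⊗ₜ[ℂ] g)
            * (sepE n * (((1:(NAlg n)ᵐᵒᵖ) ⊗ₜ[ℂ] g) * (op si ⊗ₜ[ℂ] si))) := by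
          simp only [mul_assoc]
      _ = ((1:(NAlg n)ᵐᵒᵖ) ⊗ₜ[ℂ] g) * sepE n := by rw [hEw']
  rw [op1]
  constructor
  · rintro rfl
    exact ⟨hF2, hFker, hFdef⟩
  · rintro ⟨hidem, hker, hdef⟩
    have h1 : f * (((1:(NAlg n)ᵐᵒᵖ) ⊗ₜ[ℂ] g) * sepE n) = f := by
      have h0 : (((1:(NAlg n)ᵐᵒᵖ) ⊗ₜ[ℂ] g) * sepE n)
          * (1 - ((1:(NAlg n)ᵐᵒᵖ) ⊗ₜ[ℂ] g) * sepE n) = 0 := by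
        rw [mul_sub, mul_one, hF2, sub_self]
      have h0' := (hker _).mpr ((hFker _).mp h0)
      rw [mul_sub, mul_one, sub_eq_zero] at h0'
      exact h0'.symm
    have h2 : (((1:(NAlg n)ᵐᵒᵖ) ⊗ₜ[ℂ] g) * sepE n) * f
        = ((1:(NAlg n)ᵐᵒᵖ) ⊗ₜ[ℂ] g) * sepE n := by
      have h0 : f * (1 - f) = 0 := by rw [mul_sub, mul_one, hidem, sub_self]
      have h0' := (hFker _).mpr ((hker _).mp h0)
      rw [mul_sub, mul_one, sub_eq_zero] at h0'
      exact h0'.symm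
    set F : (NAlg n)ᵐᵒᵖ ⊗[ℂ] NAlg n := ((1:(NAlg n)ᵐᵒᵖ) ⊗ₜ[ℂ] g) * sepE n with hFdef2
    have hkF : (f - F) * F = f - F := by rw [sub_mul, h1, hF2]
    have hFk : F * (f - F) = 0 := by rw [mul_sub, h2, hF2, sub_self]
    have htf : tstar f = tstar F + tstar (f - F) := by
      rw [← tstar_add]
      congr 1
      abel
    have hkdef : (op s ⊗ₜ[ℂ] s) * tstar (f - F) * (op si ⊗ₜ[ℂ] si) = f - F := by
      have hd := hdef
      rw [htf, mul_add, add_mul, hFdef] at hd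
      exact eq_sub_of_add_eq' hd
    have hw'w : (op si ⊗ₜ[ℂ] si) * (op s ⊗ₜ[ℂ] s) = 1 := by
      rw [Algebra.TensorProduct.tmul_mul_tmul, ← MulOpposite.op_mul, hssi, hsis,
        op1, ← Algebra.TensorProduct.one_def]
    have hkw : (f - F) * (op s ⊗ₜ[ℂ] s) = (op s ⊗ₜ[ℂ] s) * tstar (f - F) := by
      calc (f - F) * (op s ⊗ₜ[ℂ] s)
          = ((op s ⊗ₜ[ℂ] s) * tstar (f - F) * (op si ⊗ₜ[ℂ] si)) * (op s ⊗ₜ[ℂ] s) := by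
            rw [hkdef]
        _ = (op s ⊗ₜ[ℂ] s) * tstar (f - F) * ((op si ⊗ₜ[ℂ] si) * (op s ⊗ₜ[ℂ] s)) := by
            rw [mul_assoc]
        _ = (op s ⊗ₜ[ℂ] s) * tstar (f - F) := by rw [hw'w, mul_one]
    have h4 : sepE n * (((1:(NAlg n)ᵐᵒᵖ) ⊗ₜ[ℂ] g) * tstar (f - F)) = tstar (f - F) := by
      have h := congrArg tstar hkF
      rw [tstar_mul, tstar_F, mul_assoc] at h
      exact h
    have h5 : tstar (f - F) * (sepE n * ((1:(NAlg n)ᵐᵒᵖ) ⊗ₜ[ℂ] g)) = 0 := by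
      have h := congrArg tstar hFk
      rw [tstar_mul, tstar_F, tstar_zero] at h
      exact h
    have h6 : tstar (f - F) * sepE n = 0 := by
      have e1 : ((1:(NAlg n)ᵐᵒᵖ) ⊗ₜ[ℂ] g) * ((1:(NAlg n)ᵐᵒᵖ) ⊗ₜ[ℂ] gi) = 1 := by
        rw [tt, hggi, ← Algebra.TensorProduct.one_def]
      calc tstar (f - F) * sepE n
          = tstar (f - F) * sepE n
              * (((1:(NAlg n)ᵐᵒᵖ) ⊗ₜ[ℂ] g) * ((1:(NAlg n)ᵐᵒᵖ) ⊗ₜ[ℂ] gi)) := by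
            rw [e1, mul_one]
        _ = (tstar (f - F) * (sepE n * ((1:(NAlg n)ᵐᵒᵖ) ⊗ₜ[ℂ] g)))
              * ((1:(NAlg n)ᵐᵒᵖ) ⊗ₜ[ℂ] gi) := by
            simp only [mul_assoc]
        _ = 0 := by rw [h5, zero_mul]
    have h7 : (op s ⊗ₜ[ℂ] s) * tstar (f - F)
        = ((1:(NAlg n)ᵐᵒᵖ) ⊗ₜ[ℂ] g) * tstar (f - F) := by
      calc (op s ⊗ₜ[ℂ] s) * tstar (f - F)
          = (op s ⊗ₜ[ℂ] s) * (sepE n * (((1:(NAlg n)ᵐᵒᵖ) ⊗ₜ[ℂ] g) * tstar (f - F))) := by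
            rw [h4]
        _ = ((op s ⊗ₜ[ℂ] s) * sepE n) * (((1:(NAlg n)ᵐᵒᵖ) ⊗ₜ[ℂ] g) * tstar (f - F)) := by
            rw [mul_assoc]
        _ = (((1:(NAlg n)ᵐᵒᵖ) ⊗ₜ[ℂ] g) * sepE n)
              * (((1:(NAlg n)ᵐᵒᵖ) ⊗ₜ[ℂ] g) * tstar (f - F)) := by rw [hwE]
        _ = ((1:(NAlg n)ᵐᵒᵖ) ⊗ₜ[ℂ] g)
              * (sepE n * (((1:(NAlg n)ᵐᵒᵖ) ⊗ₜ[ℂ] g) * tstar (f - F))) := by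
            rw [mul_assoc]
        _ = ((1:(NAlg n)ᵐᵒᵖ) ⊗ₜ[ℂ] g) * tstar (f - F) := by rw [h4]
    have h8 : (f - F) * ((op s ⊗ₜ[ℂ] s) * sepE n) = 0 := by
      calc (f - F) * ((op s ⊗ₜ[ℂ] s) * sepE n)
          = ((f - F) * (op s ⊗ₜ[ℂ] s)) * sepE n := by rw [mul_assoc]
        _ = ((op s ⊗ₜ[ℂ] s) * tstar (f - F)) * sepE n := by rw [hkw]
        _ = (((1:(NAlg n)ᵐᵒᵖ) ⊗ₜ[ℂ] g) * tstar (f - F)) * sepE n := by rw [h7]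
        _ = ((1:(NAlg n)ᵐᵒᵖ) ⊗ₜ[ℂ] g) * (tstar (f - F) * sepE n) := by rw [mul_assoc]
        _ = 0 := by rw [h6, mul_zero]
    have h9 : (f - F) * F = 0 := by
      rw [hwE] at h8
      exact h8
    have h10 : f - F = 0 := by rw [← hkF, h9]
    rw [sub_eq_zero] at h10
    exact h10
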